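/- Let (d_i) be a sequence of random variables adapted to a filtration (F_i) that is conditionally symmetric, i.e., for each i the conditional distribution of d_i given F_{i−1} equals the conditional distribution of −d_i given F_{i−1}. Then for every λ ∈ ℝ, the process exp( λ·Σ_{i=1}^n d_i − (λ²/2)·Σ_{i=1}^n d_i² ), n ≥ 1, is a supermartingale with respect to (F_n), with mean ≤ 1. -/

import Mathlib

open MeasureTheory

/-- Lemma 1.4 (conditionally symmetric sequences). -/
theorem stmt_10 {Ω : Type*} {mΩ : MeasurableSpace Ω} {μ : Measure Ω}
    [IsProbabilityMeasure μ] (ℱ : Filtration ℕ mΩ)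
    (d : ℕ → Ω → ℝ)
    (hadp : ∀ n, StronglyMeasurable[ℱ (n + 1)] (d (n + 1)))
    (hsym : ∀ n, ∀ f : ℝ → ℝ, Measurable f → (∃ C : ℝ, ∀ x, |f x| ≤ C) →
      μ[fun ω => f (d (n + 1) ω) | ℱ n] =ᵐ[μ] μ[fun ω => f (-d (n + 1) ω) | ℱ n])
    (lam : ℝ) :
    Supermartingale
      (fun n ω => Real.exp (lam * (∑ i ∈ Finset.range n, d (i + 1) ω) -
        lam ^ 2 * (∑ i ∈ Finset.range n, (d (i + 1) ω) ^ 2) / 2)) ℱ μ ∧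
    ∀ n, ∫ ω, Real.exp (lam * (∑ i ∈ Finset.range n, d (i + 1) ω) -
        lam ^ 2 * (∑ i ∈ Finset.range n, (d (i + 1) ω) ^ 2) / 2) ∂μ ≤ 1 := by
  set f : ℝ → ℝ := fun x => Real.exp (lam * x - lam ^ 2 * x ^ 2 / 2) with hf_def
  have hf_meas : Measurable f := by
    apply Real.measurable_exp.comp; fun_prop
  have hf_bound : ∀ x, |f x| ≤ Real.exp (1 / 2) := by
    intro x
    rw [abs_of_pos (Real.exp_pos _)]
    apply Real.exp_le_exp.2
    nlinarith [sq_nonneg (lam * x - 1)]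
  -- the process
  set Y : ℕ → Ω → ℝ := fun n ω => Real.exp (lam * (∑ i ∈ Finset.range n, d (i + 1) ω) -
        lam ^ 2 * (∑ i ∈ Finset.range n, (d (i + 1) ω) ^ 2) / 2) with hY_def
  have hY_prod : ∀ n ω, Y n ω = ∏ i ∈ Finset.range n, f (d (i + 1) ω) := by
    intro n ω
    rw [hY_def]
    simp only [hf_def]
    rw [← Real.exp_sum]
    congr 1
    rw [Finset.mul_sum, Finset.sum_sub_distrib, ← Finset.sum_div, Finset.mul_sum]
  have hY_succ : ∀ n, Y (n + 1) = fun ω => Y n ω * f (d (n + 1) ω) := by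
    intro n
    funext ω
    rw [hY_prod, hY_prod, Finset.prod_range_succ]
  have hY_pos : ∀ n ω, 0 < Y n ω := fun n ω => Real.exp_pos _
  have hY_bound : ∀ n ω, |Y n ω| ≤ Real.exp (n * (1 / 2)) := by
    intro n ω
    rw [abs_of_pos (hY_pos n ω), hY_prod]
    calc ∏ i ∈ Finset.range n, f (d (i + 1) ω)
        ≤ ∏ i ∈ Finset.range n, Real.exp (1 / 2) := by
          apply Finset.prod_le_prod
          · exact fun i _ => (Real.exp_pos _).le
          · exact fun i _ => (abs_le.1 (hf_bound _)).2
      _ = Real.exp (n * (1 / 2)) := by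
          rw [Finset.prod_const, ← Real.exp_nat_mul]
          simp
  -- adaptedness
  have hY_adp : ∀ n, StronglyMeasurable[ℱ n] (Y n) := by
    intro n
    have : ∀ i ∈ Finset.range n, StronglyMeasurable[ℱ n] (d (i + 1)) := by
      intro i hi
      exact (hadp i).mono (ℱ.mono (Finset.mem_range.1 hi))
    apply Measurable.stronglyMeasurable
    apply Real.measurable_exp.comp
    apply Measurable.sub
    · exact (Finset.measurable_sum _ fun i hi => (this i hi).measurable).const_mul lam
    · exact ((Finset.measurable_sum _ fun i hi =>
        ((this i hi).measurable.pow_const 2)).const_mul (lam ^ 2)).div_const 2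
  -- integrability
  have hY_int : ∀ n, Integrable (Y n) μ := by
    intro n
    refine Integrable.mono' (integrable_const (Real.exp (n * (1 / 2))))
      ((hY_adp n).mono (ℱ.le n)).aestronglyMeasurable ?_
    exact Filter.Eventually.of_forall fun ω => by
      rw [Real.norm_eq_abs]; exact hY_bound n ω
  have hfd_meas : ∀ n, Measurable[mΩ] fun ω => f (d (n + 1) ω) :=
    fun n => hf_meas.comp ((hadp n).measurable.mono (ℱ.le (n + 1)) le_rfl)
  have hfd_int : ∀ n, Integrable (fun ω => f (d (n + 1) ω)) μ := by
    intro n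
    refine Integrable.mono' (integrable_const (Real.exp (1 / 2)))
      (hfd_meas n).aestronglyMeasurable ?_
    exact Filter.Eventually.of_forall fun ω => by
      rw [Real.norm_eq_abs]; exact hf_bound _
  -- key conditional expectation bound
  have hkey : ∀ n, μ[fun ω => f (d (n + 1) ω) | ℱ n] ≤ᵐ[μ] fun _ => 1 := by
    intro n
    set g : ℝ → ℝ := fun x => f (-x) with hg_def
    have hg_meas : Measurable g := hf_meas.comp measurable_neg
    have hgd_int : Integrable (fun ω => g (d (n + 1) ω)) μ := by
      refine Integrable.mono' (integrable_const (Real.exp (1 / 2)))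
        ((hg_meas.comp ((hadp n).measurable.mono (ℱ.le (n + 1)) le_rfl)).aestronglyMeasurable) ?_
      exact Filter.Eventually.of_forall fun ω => by
        rw [Real.norm_eq_abs]; exact hf_bound _
    have hsym' : μ[fun ω => f (d (n + 1) ω) | ℱ n] =ᵐ[μ] μ[fun ω => g (d (n + 1) ω) | ℱ n] :=
      hsym n f hf_meas ⟨Real.exp (1 / 2), hf_bound⟩
    have hadd : μ[fun ω => f (d (n + 1) ω) + g (d (n + 1) ω) | ℱ n] =ᵐ[μ]
        μ[fun ω => f (d (n + 1) ω) | ℱ n] + μ[fun ω => g (d (n + 1) ω) | ℱ n] :=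
      condExp_add (hfd_int n) hgd_int (ℱ n)
    have hle2 : ∀ x : ℝ, f x + g x ≤ 2 := by
      intro x
      have h1 : f x + g x = 2 * Real.cosh (lam * x) * Real.exp (-(lam ^ 2 * x ^ 2 / 2)) := by
        simp only [hf_def, hg_def, Real.cosh_eq]
        rw [sub_eq_add_neg, Real.exp_add, sub_eq_add_neg, Real.exp_add]
        ring_nf
      rw [h1]
      have h2 : Real.cosh (lam * x) ≤ Real.exp ((lam * x) ^ 2 / 2) :=
        Real.cosh_le_exp_half_sq _
      have h3 : 2 * Real.cosh (lam * x) * Real.exp (-(lam ^ 2 * x ^ 2 / 2)) ≤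
          2 * Real.exp ((lam * x) ^ 2 / 2) * Real.exp (-(lam ^ 2 * x ^ 2 / 2)) := by
        have := Real.exp_pos (-(lam ^ 2 * x ^ 2 / 2))
        nlinarith
      refine h3.trans ?_
      rw [mul_assoc, ← Real.exp_add]
      have : (lam * x) ^ 2 / 2 + -(lam ^ 2 * x ^ 2 / 2) = 0 := by ring
      rw [this, Real.exp_zero, mul_one]
    have hmono : μ[fun ω => f (d (n + 1) ω) + g (d (n + 1) ω) | ℱ n] ≤ᵐ[μ]
        μ[(fun _ => (2 : ℝ)) | ℱ n] := by
      refine condExp_mono ((hfd_int n).add hgd_int) (integrable_const 2) ?_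
      exact Filter.Eventually.of_forall fun ω => hle2 _
    have hconst : μ[(fun _ => (2 : ℝ)) | ℱ n] = fun _ => (2 : ℝ) :=
      condExp_const (μ := μ) (ℱ.le n) 2
    filter_upwards [hsym', hadd, hmono] with ω h1 h2 h3
    have : 2 * (μ[fun ω => f (d (n + 1) ω) | ℱ n]) ω ≤ 2 := by
      calc 2 * (μ[fun ω => f (d (n + 1) ω) | ℱ n]) ω
          = (μ[fun ω => f (d (n + 1) ω) | ℱ n]) ω +
            (μ[fun ω => g (d (n + 1) ω) | ℱ n]) ω := by rw [← h1]; ring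
        _ = (μ[fun ω => f (d (n + 1) ω) + g (d (n + 1) ω) | ℱ n]) ω := by
            rw [h2]; rfl
        _ ≤ (μ[(fun _ => (2 : ℝ)) | ℱ n]) ω := h3
        _ = 2 := by rw [hconst]
    linarith
  -- supermartingale property
  have hsm : Supermartingale Y ℱ μ := by
    refine supermartingale_nat (fun n => hY_adp n) hY_int fun n => ?_
    have hsplit : Y (n + 1) = (Y n) * fun ω => f (d (n + 1) ω) := by
      rw [hY_succ n]; rfl
    rw [hsplit]
    have hpull : μ[Y n * fun ω => f (d (n + 1) ω) | ℱ n] =ᵐ[μ]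
        Y n * μ[fun ω => f (d (n + 1) ω) | ℱ n] := by
      refine condExp_mul_of_stronglyMeasurable_left (hY_adp n) ?_ (hfd_int n)
      rw [← hsplit]; exact hY_int (n + 1)
    filter_upwards [hpull, hkey n] with ω h1 h2
    calc (μ[Y n * fun ω => f (d (n + 1) ω) | ℱ n]) ω
        = Y n ω * (μ[fun ω => f (d (n + 1) ω) | ℱ n]) ω := h1
      _ ≤ Y n ω * 1 := by
          exact mul_le_mul_of_nonneg_left h2 (hY_pos n ω).le
      _ = Y n ω := mul_one _
  refine ⟨hsm, fun n => ?_⟩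
  have h0 : ∫ ω, Y n ω ∂μ ≤ ∫ ω, Y 0 ω ∂μ := by
    have := hsm.setIntegral_le (Nat.zero_le n) (MeasurableSet.univ (α := Ω))
    simpa [setIntegral_univ] using this
  have hY0 : ∫ ω, Y 0 ω ∂μ = 1 := by
    simp [hY_def]
  calc ∫ ω, Y n ω ∂μ ≤ ∫ ω, Y 0 ω ∂μ := h0
    _ = 1 := hY0
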